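/- Let k be a commutative ring, Q ∈ k[Y²] (i.e., Q = Σ q_i Y^i with q_i = 0 for i odd) and P = −Y. Then there is a unique twisting map s: k[t]/⟨t²⟩ ⊗ k[Y] → k[Y] ⊗ k[t]/⟨t²⟩ with s(t ⊗ Y) = Q ⊗ 1 + P ⊗ t. Equivalently, the pair of maps ι_1 (the algebra endomorphism with ι_1(Y) = −Y) and ι_0 (the ι_1-derivation with ι_0(Y) = Q) satisfies ι_0² = 0 and ι_0∘ι_1 = −ι_1∘ι_0. -/

import Mathlib

open TensorProduct

/-- A twisting map `s : B ⊗ A → A ⊗ B`: it is compatible with the units and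
with the multiplications of `A` and `B` (stated on pure tensors, which
suffices by linearity). -/
structure IsTwistingMap (k A B : Type*) [CommRing k] [Ring A] [Ring B]
    [Algebra k A] [Algebra k B] (s : B ⊗[k] A →ₗ[k] A ⊗[k] B) : Prop where
  unit_left : ∀ a : A, s (1 ⊗ₜ a) = a ⊗ₜ 1
  unit_right : ∀ b : B, s (b ⊗ₜ 1) = 1 ⊗ₜ b
  mul_compat_B : ∀ (b b' : B) (a : A),
    s ((b * b') ⊗ₜ a) =
      (LinearMap.lTensor A (LinearMap.mul' k B))
        ((TensorProduct.assoc k A B B)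
          ((LinearMap.rTensor B s)
            ((TensorProduct.assoc k B A B).symm
              ((LinearMap.lTensor B s)
                ((TensorProduct.assoc k B B A) ((b ⊗ₜ b') ⊗ₜ a))))))
  mul_compat_A : ∀ (b : B) (a a' : A),
    s (b ⊗ₜ (a * a')) =
      (LinearMap.rTensor B (LinearMap.mul' k A))
        ((TensorProduct.assoc k A A B).symm
          ((LinearMap.lTensor A s)
            ((TensorProduct.assoc k A B A)
              ((LinearMap.rTensor A s)
                ((TensorProduct.assoc k B A A).symm (b ⊗ₜ (a ⊗ₜ a')))))))

section Aux
open TensorProduct DualNumber Polynomial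

variable {k : Type*} [CommRing k] (Q : k[X])

noncomputable def iotaOne : k[X] →ₐ[k] k[X] := aeval (-X)

noncomputable def iotaZero : k[X] →ₗ[k] k[X] :=
  (Polynomial.basisMonomials k).constr k fun n => if Odd n then Q * X ^ (n - 1) else 0

lemma iotaOne_pow (n : ℕ) : iotaOne ((X : k[X]) ^ n) = (-X) ^ n := by
  simp [iotaOne]

lemma iotaZero_pow (n : ℕ) :
    iotaZero Q ((X : k[X]) ^ n) = if Odd n then Q * X ^ (n - 1) else 0 := by
  have h := (Polynomial.basisMonomials k).constr_basis k
    (fun n => if Odd n then Q * X ^ (n - 1) else (0 : k[X])) n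
  rw [← h]
  congr 1
  simp [X_pow_eq_monomial]

lemma iotaZero_monomial (n : ℕ) (c : k) :
    iotaZero Q (monomial n c) = if Odd n then C c * (Q * X ^ (n - 1)) else 0 := by
  rw [← C_mul_X_pow_eq_monomial, ← smul_eq_C_mul, map_smul, iotaZero_pow]
  split <;> simp [smul_eq_C_mul]

lemma iotaOne_monomial (n : ℕ) (c : k) :
    iotaOne (monomial n c) = C c * (-X : k[X]) ^ n := by
  rw [← C_mul_X_pow_eq_monomial, ← smul_eq_C_mul, map_smul, iotaOne_pow, smul_eq_C_mul]

lemma iotaZero_even (p : k[X]) (hp : ∀ i : ℕ, Odd i → p.coeff i = 0) :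
    iotaZero Q p = 0 := by
  conv_lhs => rw [p.as_sum_support]
  rw [map_sum]
  refine Finset.sum_eq_zero fun i _ => ?_
  rw [iotaZero_monomial]
  rcases Nat.even_or_odd i with h | h
  · rw [if_neg (by simp [Nat.odd_iff, Nat.even_iff] at h ⊢; omega)]
  · simp [hp i h]

lemma iotaOne_even (p : k[X]) (hp : ∀ i : ℕ, Odd i → p.coeff i = 0) :
    iotaOne p = p := by
  conv_lhs => rw [p.as_sum_support]
  conv_rhs => rw [p.as_sum_support]
  rw [map_sum]
  refine Finset.sum_congr rfl fun i _ => ?_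
  rw [iotaOne_monomial]
  rcases Nat.even_or_odd i with h | h
  · rw [h.neg_pow]
    exact C_mul_X_pow_eq_monomial
  · simp [hp i h]

lemma iotaZero_mul (a b : k[X]) :
    iotaZero Q (a * b) = iotaZero Q a * b + iotaOne a * iotaZero Q b := by
  induction a using Polynomial.induction_on' with
  | add p q hp hq =>
    simp only [add_mul, map_add, hp, hq]
    ring
  | monomial n c =>
    induction b using Polynomial.induction_on' with
    | add p q hp hq =>
      simp only [mul_add, map_add, hp, hq]
      ring
    | monomial m d =>
      rw [monomial_mul_monomial, iotaZero_monomial, iotaZero_monomial, iotaZero_monomial,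
        iotaOne_monomial, ← C_mul_X_pow_eq_monomial]
      rcases Nat.even_or_odd' n with ⟨r, rfl | rfl⟩ <;>
        rcases Nat.even_or_odd' m with ⟨t, rfl | rfl⟩
      · rw [if_neg (by rw [Nat.odd_iff]; omega), if_neg (by rw [Nat.odd_iff]; omega),
          if_neg (by rw [Nat.odd_iff]; omega)]
        ring
      · rw [if_pos (by rw [Nat.odd_iff]; omega), if_neg (by rw [Nat.odd_iff]; omega),
          if_pos (by rw [Nat.odd_iff]; omega),
          show 2 * r + (2 * t + 1) - 1 = 2 * r + 2 * t from by omega,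
          show 2 * t + 1 - 1 = 2 * t from by omega,
          Even.neg_pow ⟨r, by ring⟩, C_mul]
        ring
      · rw [if_pos (by rw [Nat.odd_iff]; omega), if_pos (by rw [Nat.odd_iff]; omega),
          if_neg (by rw [Nat.odd_iff]; omega),
          show 2 * r + 1 + 2 * t - 1 = 2 * r + 2 * t from by omega,
          show 2 * r + 1 - 1 = 2 * r from by omega, C_mul]
        ring
      · rw [if_neg (by rw [Nat.odd_iff]; omega), if_pos (by rw [Nat.odd_iff]; omega),
          if_pos (by rw [Nat.odd_iff]; omega),
          show 2 * r + 1 - 1 = 2 * r from by omega,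
          show 2 * t + 1 - 1 = 2 * t from by omega,
          Odd.neg_pow ⟨r, by ring⟩]
        ring

lemma iotaZero_C (c : k) : iotaZero Q (C c) = 0 := by
  have := iotaZero_monomial Q 0 c
  simpa [Nat.odd_iff] using this

lemma iotaOne_C (c : k) : iotaOne (C c : k[X]) = C c := by
  simp [iotaOne]

lemma iotaZero_iotaZero (hQ : ∀ i : ℕ, Odd i → Q.coeff i = 0) (p : k[X]) :
    iotaZero Q (iotaZero Q p) = 0 := by
  induction p using Polynomial.induction_on' with
  | add p q hp hq => simp [hp, hq]
  | monomial n c =>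
    rw [iotaZero_monomial]
    split
    · rw [iotaZero_mul, iotaZero_mul, iotaZero_C, iotaZero_even Q Q hQ, iotaZero_pow]
      rename_i h
      obtain ⟨r, rfl⟩ := h
      rw [if_neg (by rw [Nat.odd_iff]; omega)]
      simp [iotaOne_C]
    · simp

lemma iotaZero_iotaOne (hQ : ∀ i : ℕ, Odd i → Q.coeff i = 0) (p : k[X]) :
    iotaZero Q (iotaOne p) = - iotaOne (iotaZero Q p) := by
  induction p using Polynomial.induction_on' with
  | add p q hp hq => simp [hp, hq]; ring
  | monomial n c =>
    rw [iotaOne_monomial, iotaZero_monomial]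
    rcases Nat.even_or_odd' n with ⟨r, rfl | rfl⟩
    · rw [if_neg (by rw [Nat.odd_iff]; omega), Even.neg_pow ⟨r, by ring⟩,
        iotaZero_mul, iotaZero_C, iotaZero_pow, if_neg (by rw [Nat.odd_iff]; omega)]
      simp
    · rw [if_pos (by rw [Nat.odd_iff]; omega), Odd.neg_pow ⟨r, by ring⟩,
        show 2 * r + 1 - 1 = 2 * r from by omega, mul_neg, map_neg, neg_inj,
        iotaZero_mul, iotaZero_C, iotaZero_pow, if_pos (by rw [Nat.odd_iff]; omega),
        show 2 * r + 1 - 1 = 2 * r from by omega, map_mul, map_mul, iotaOne_C,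
        iotaOne_even Q hQ, iotaOne_pow, Even.neg_pow ⟨r, by ring⟩]
      ring

noncomputable def twist : DualNumber k ⊗[k] k[X] →ₗ[k] k[X] ⊗[k] DualNumber k :=
  TensorProduct.lift
    ((TrivSqZeroExt.fstHom k k k).toLinearMap.smulRight
        (((TensorProduct.mk k (k[X]) (DualNumber k)).flip 1))
      + (TrivSqZeroExt.sndHom k k).smulRight
        (((TensorProduct.mk k (k[X]) (DualNumber k)).flip 1) ∘ₗ iotaZero Q
          + ((TensorProduct.mk k (k[X]) (DualNumber k)).flip ε) ∘ₗ iotaOne.toLinearMap))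

lemma twist_tmul (b : DualNumber k) (a : k[X]) :
    twist Q (b ⊗ₜ a) =
      b.fst • (a ⊗ₜ 1) + b.snd • (iotaZero Q a ⊗ₜ 1 + iotaOne a ⊗ₜ ε) := by
  simp [twist, TrivSqZeroExt.fstHom, smul_add]
  rfl

lemma twist_one_tmul (a : k[X]) : twist Q ((1 : DualNumber k) ⊗ₜ a) = a ⊗ₜ 1 := by
  simp [twist_tmul]

lemma twist_eps_tmul (a : k[X]) :
    twist Q ((ε : DualNumber k) ⊗ₜ a) = iotaZero Q a ⊗ₜ 1 + iotaOne a ⊗ₜ ε := by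
  simp [twist_tmul]

lemma iotaZero_one : iotaZero Q (1 : k[X]) = 0 := by
  simpa using iotaZero_C Q 1

lemma dual_decomp (b : DualNumber k) :
    b = b.fst • (1 : DualNumber k) + b.snd • ε := by
  ext <;> simp

set_option synthInstance.maxHeartbeats 1000000 in
set_option maxHeartbeats 1000000 in
lemma twist_compat_A (b : DualNumber k) (a a' : k[X]) :
    twist Q (b ⊗ₜ (a * a')) =
      (LinearMap.rTensor (DualNumber k) (LinearMap.mul' k (k[X])))
        ((TensorProduct.assoc k (k[X]) (k[X]) (DualNumber k)).symm
          ((LinearMap.lTensor (k[X]) (twist Q))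
            ((TensorProduct.assoc k (k[X]) (DualNumber k) (k[X]))
              ((LinearMap.rTensor (k[X]) (twist Q))
                ((TensorProduct.assoc k (DualNumber k) (k[X]) (k[X])).symm
                  (b ⊗ₜ (a ⊗ₜ a'))))))) := by
  simp only [TensorProduct.assoc_tmul, TensorProduct.assoc_symm_tmul, LinearMap.rTensor_tmul,
    LinearMap.lTensor_tmul, LinearMap.mul'_apply, twist_tmul, map_add, map_smul,
    tmul_add, add_tmul, smul_tmul', tmul_smul, smul_add, iotaZero_mul, map_mul,
    iotaZero_one, map_one, mul_one, one_mul, TrivSqZeroExt.fst_one, TrivSqZeroExt.snd_one,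
    DualNumber.fst_eps, DualNumber.snd_eps, zero_smul, one_smul, smul_zero, zero_tmul,
    add_zero, zero_add]
  simp only [smul_mul_assoc, mul_smul_comm, ← smul_tmul', smul_smul]
  module

set_option synthInstance.maxHeartbeats 1000000 in
set_option maxHeartbeats 1000000 in
lemma twist_compat_B (hQ : ∀ i : ℕ, Odd i → Q.coeff i = 0) (b b' : DualNumber k) (a : k[X]) :
    twist Q ((b * b') ⊗ₜ a) =
      (LinearMap.lTensor (k[X]) (LinearMap.mul' k (DualNumber k)))
        ((TensorProduct.assoc k (k[X]) (DualNumber k) (DualNumber k))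
          ((LinearMap.rTensor (DualNumber k) (twist Q))
            ((TensorProduct.assoc k (DualNumber k) (k[X]) (DualNumber k)).symm
              ((LinearMap.lTensor (DualNumber k) (twist Q))
                ((TensorProduct.assoc k (DualNumber k) (DualNumber k) (k[X]))
                  ((b ⊗ₜ b') ⊗ₜ a)))))) := by
  simp only [TensorProduct.assoc_tmul, TensorProduct.assoc_symm_tmul, LinearMap.rTensor_tmul,
    LinearMap.lTensor_tmul, LinearMap.mul'_apply, twist_tmul, map_add, map_smul,
    tmul_add, add_tmul, smul_tmul', tmul_smul, smul_add, iotaZero_iotaZero Q hQ,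
    iotaZero_iotaOne Q hQ, iotaZero_one, map_one, mul_one, one_mul,
    TrivSqZeroExt.fst_one, TrivSqZeroExt.snd_one, DualNumber.fst_eps, DualNumber.snd_eps,
    TrivSqZeroExt.fst_mul, TrivSqZeroExt.snd_mul, DualNumber.eps_mul_eps,
    TrivSqZeroExt.fst_smul, TrivSqZeroExt.snd_smul,
    zero_smul, one_smul, smul_zero, zero_tmul, tmul_zero, add_zero, zero_add, mul_zero, zero_mul]
  simp only [smul_mul_assoc, mul_smul_comm, ← smul_tmul', smul_smul, smul_eq_mul,
    MulOpposite.op_smul, MulOpposite.smul_eq_mul_unop, MulOpposite.unop_op,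
    neg_tmul, tmul_neg, mul_neg, neg_mul, smul_neg]
  module

lemma iotaZero_X : iotaZero Q (X : k[X]) = Q := by
  simpa [Nat.odd_iff] using iotaZero_pow Q 1

lemma iotaOne_X : iotaOne (X : k[X]) = -X := aeval_X _

lemma twist_unit_right (b : DualNumber k) : twist Q (b ⊗ₜ (1 : k[X])) = 1 ⊗ₜ b := by
  rw [twist_tmul, iotaZero_one, map_one]
  conv_rhs => rw [dual_decomp b]
  simp [tmul_add]

end Aux

set_option synthInstance.maxHeartbeats 1000000 in
set_option maxHeartbeats 1000000 in
open DualNumber Polynomial in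

theorem stmt19 (k : Type*) [CommRing k] (Q : Polynomial k)
    (hQ : ∀ i : ℕ, Odd i → Q.coeff i = 0) :
    ∃! s : DualNumber k ⊗[k] Polynomial k →ₗ[k] Polynomial k ⊗[k] DualNumber k,
      IsTwistingMap k (Polynomial k) (DualNumber k) s ∧
      s ((ε : DualNumber k) ⊗ₜ (X : Polynomial k)) =
        Q ⊗ₜ (1 : DualNumber k) + (-X : Polynomial k) ⊗ₜ (ε : DualNumber k) := by
  refine ⟨twist Q, ⟨⟨twist_one_tmul Q, twist_unit_right Q, twist_compat_B Q hQ,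
    twist_compat_A Q⟩, ?_⟩, ?_⟩
  · rw [twist_eps_tmul, iotaZero_X, iotaOne_X]
  · rintro s' ⟨hT, hv⟩
    have key : ∀ n : ℕ, s' (ε ⊗ₜ ((X : k[X]) ^ n)) = twist Q (ε ⊗ₜ ((X : k[X]) ^ n)) := by
      intro n
      induction n with
      | zero =>
        rw [pow_zero, hT.unit_right, twist_unit_right]
      | succ n ih =>
        rw [pow_succ']
        rw [hT.mul_compat_A ε X ((X : k[X]) ^ n), twist_compat_A Q ε X ((X : k[X]) ^ n)]
        simp only [TensorProduct.assoc_tmul, TensorProduct.assoc_symm_tmul,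
          LinearMap.rTensor_tmul, LinearMap.lTensor_tmul, hv, twist_eps_tmul, iotaZero_X,
          iotaOne_X, map_add, tmul_add, add_tmul, hT.unit_left, twist_one_tmul, ih]
    have hax : ∀ a : k[X], s' (ε ⊗ₜ a) = twist Q (ε ⊗ₜ a) := by
      intro a
      induction a using Polynomial.induction_on' with
      | add p q hp hq => rw [tmul_add, map_add, map_add, hp, hq]
      | monomial n c =>
        rw [← C_mul_X_pow_eq_monomial, ← smul_eq_C_mul, tmul_smul, map_smul, map_smul, key n]
    apply TensorProduct.ext'
    intro b a
    have hb : b ⊗ₜ[k] a = b.fst • ((1 : DualNumber k) ⊗ₜ a) + b.snd • (ε ⊗ₜ a) := by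
      rw [smul_tmul', smul_tmul', ← add_tmul, ← dual_decomp]
    rw [hb, map_add, map_add, map_smul, map_smul, map_smul, map_smul, hT.unit_left,
      twist_one_tmul, hax]
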